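/- Fix a β-sequence [·]_β, let (P_n)_{n≥0} be an admissible polynomial sequence with β-generating function H(x,z) = Σ_{n≥0} (1/[n]_β!) P_n(x) z^n, and let u ∈ 𝒫₀,₁. Then the following are equivalent: (i) Σ_{n≥0} (1/[n]_β!) (D_β P_n)(x) z^n = u(z) · H(x,z) in ℂ[x][[z]]; (ii) H(x,z) = exp_β(u(z)x), i.e. Σ_{n≥0} (1/[n]_β!) P_n(x) z^n = Σ_{k≥0} (1/[k]_β!) x^k u(z)^k. -/

import Mathlib

/-- The β-factorial `[n]_β! = ∏_{i=1}^n [i]_β`. -/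
noncomputable def betaFact (β : ℕ → ℝ) (n : ℕ) : ℝ := ∏ i ∈ Finset.range n, β (i + 1)

open Polynomial Finset

section aux
variable (β : ℕ → ℝ)

lemma betaFact_succ (n : ℕ) : betaFact β (n+1) = betaFact β n * β (n+1) :=
  Finset.prod_range_succ _ _

lemma betaFact_ne_zero (hβpos : ∀ n, 1 ≤ n → 0 < β n) (n : ℕ) :
    (betaFact β n : ℂ) ≠ 0 := by
  have h : betaFact β n ≠ 0 := by
    induction n with
    | zero => simp [betaFact]
    | succ m ih =>
      rw [betaFact_succ]
      exact mul_ne_zero ih (ne_of_gt (hβpos (m+1) (Nat.le_add_left 1 m)))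
  exact_mod_cast h

lemma coeff_pow_zero {u : PowerSeries ℂ} (hu0 : PowerSeries.constantCoeff u = 0)
    {j k : ℕ} (h : j < k) : PowerSeries.coeff j (u ^ k) = 0 := by
  have hdvd : (PowerSeries.X : PowerSeries ℂ) ^ k ∣ u ^ k :=
    pow_dvd_pow_of_dvd (PowerSeries.X_dvd_iff.mpr hu0) k
  exact (PowerSeries.X_pow_dvd_iff.mp hdvd) j h

lemma coeff_D (hβ0 : β 0 = 0) (D : Module.End ℂ (Polynomial ℂ))
    (hD : ∀ n : ℕ, D (Polynomial.X ^ n) = ((β n : ℂ)) • Polynomial.X ^ (n - 1))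
    (p : Polynomial ℂ) (j : ℕ) :
    (D p).coeff j = (β (j+1) : ℂ) * p.coeff (j+1) := by
  induction p using Polynomial.induction_on' with
  | add p q hp hq => simp [map_add, hp, hq, mul_add]
  | monomial n a =>
    have h1 : (Polynomial.monomial n a : Polynomial ℂ) = a • X ^ n := by
      rw [smul_eq_C_mul, C_mul_X_pow_eq_monomial]
    rw [h1, map_smul, hD n]
    match n with
    | 0 => simp [hβ0, Polynomial.coeff_one]
    | m+1 =>
      simp only [Nat.add_sub_cancel, Polynomial.coeff_smul, Polynomial.coeff_X_pow,
        Polynomial.coeff_monomial, smul_eq_mul]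
      by_cases h : j = m
      · subst h; simp [mul_comm]
      · have h' : ¬ (m + 1 = j + 1) := by omega
        simp [h, h']

lemma D_inj (hβ0 : β 0 = 0) (hβpos : ∀ n, 1 ≤ n → 0 < β n)
    (D : Module.End ℂ (Polynomial ℂ))
    (hD : ∀ n : ℕ, D (Polynomial.X ^ n) = ((β n : ℂ)) • Polynomial.X ^ (n - 1))
    {p q : Polynomial ℂ} (h0 : p.coeff 0 = q.coeff 0) (hDeq : D p = D q) : p = q := by
  ext m
  match m with
  | 0 => exact h0
  | j+1 =>
    have h1 := coeff_D β hβ0 D hD p j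
    have h2 := coeff_D β hβ0 D hD q j
    rw [hDeq] at h1
    have hb : (β (j+1) : ℂ) ≠ 0 := by
      exact_mod_cast ne_of_gt (hβpos (j+1) (Nat.le_add_left 1 j))
    exact mul_left_cancel₀ hb (h1.symm.trans h2)

end aux

noncomputable def Rpoly (β : ℕ → ℝ) (u : PowerSeries ℂ) (n : ℕ) : Polynomial ℂ :=
  ∑ k ∈ Finset.range (n + 1),
    ((betaFact β k : ℂ))⁻¹ •
      (Polynomial.C (PowerSeries.coeff n (u ^ k)) * Polynomial.X ^ k)

section aux2
variable (β : ℕ → ℝ) (u : PowerSeries ℂ)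

lemma coeff_Rpoly (n j : ℕ) :
    (Rpoly β u n).coeff j =
      if j ≤ n then (betaFact β j : ℂ)⁻¹ * PowerSeries.coeff n (u ^ j) else 0 := by
  rw [Rpoly, Polynomial.finset_sum_coeff]
  simp only [Polynomial.coeff_smul, Polynomial.coeff_C_mul, Polynomial.coeff_X_pow,
    smul_eq_mul, mul_ite, mul_one, mul_zero]
  simp only [eq_comm (a := j)]
  rw [Finset.sum_ite_eq' (Finset.range (n+1)) j
    (fun k => (betaFact β k : ℂ)⁻¹ * PowerSeries.coeff n (u ^ k))]
  simp [Finset.mem_range, Nat.lt_succ_iff]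

lemma coeff_Rpoly' (hu0 : PowerSeries.constantCoeff u = 0) (n j : ℕ) :
    (Rpoly β u n).coeff j = (betaFact β j : ℂ)⁻¹ * PowerSeries.coeff n (u ^ j) := by
  rw [coeff_Rpoly]
  split_ifs with h
  · rfl
  · rw [coeff_pow_zero hu0 (by omega)]; ring

lemma D_Rpoly (hβ0 : β 0 = 0) (hβpos : ∀ n, 1 ≤ n → 0 < β n)
    (D : Module.End ℂ (Polynomial ℂ))
    (hD : ∀ n : ℕ, D (Polynomial.X ^ n) = ((β n : ℂ)) • Polynomial.X ^ (n - 1))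
    (hu0 : PowerSeries.constantCoeff u = 0) (n : ℕ) :
    D (Rpoly β u n) =
      ∑ p ∈ Finset.HasAntidiagonal.antidiagonal n,
        Polynomial.C (PowerSeries.coeff p.1 u) * Rpoly β u p.2 := by
  ext m
  rw [coeff_D β hβ0 D hD, coeff_Rpoly' β u hu0, Polynomial.finset_sum_coeff]
  simp only [Polynomial.coeff_C_mul, coeff_Rpoly' β u hu0]
  have hsum : ∑ p ∈ Finset.HasAntidiagonal.antidiagonal n,
      PowerSeries.coeff p.1 u * ((betaFact β m : ℂ)⁻¹ * PowerSeries.coeff p.2 (u ^ m))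
      = (betaFact β m : ℂ)⁻¹ * PowerSeries.coeff n (u ^ (m+1)) := by
    rw [pow_succ', PowerSeries.coeff_mul, Finset.mul_sum]
    apply Finset.sum_congr rfl
    intro p _
    ring
  rw [hsum, betaFact_succ]
  have hb : (β (m+1) : ℂ) ≠ 0 := by
    exact_mod_cast ne_of_gt (hβpos (m+1) (Nat.le_add_left 1 m))
  have hbf : (betaFact β m : ℂ) ≠ 0 := betaFact_ne_zero β hβpos m
  push_cast
  field_simp

end aux2

/-- for an admissible polynomial sequence with β-generating function `H` and
`u ∈ 𝒫₀,₁`, the identity `Σ (1/[n]_β!)(D_β P_n)(x) zⁿ = u(z)·H(x,z)` holds if and only if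
`H(x,z) = exp_β(u(z)x)`. -/
theorem stmt_13 (β : ℕ → ℝ) (hβ0 : β 0 = 0) (hβ1 : β 1 = 1) (hβpos : ∀ n, 1 ≤ n → 0 < β n)
    (P : ℕ → Polynomial ℂ)
    (hmonic : ∀ n, (P n).Monic) (hdeg : ∀ n, (P n).natDegree = n)
    (hzero : ∀ n, 1 ≤ n → (P n).coeff 0 = 0)
    (D : Module.End ℂ (Polynomial ℂ))
    (hD : ∀ n : ℕ, D (Polynomial.X ^ n) = ((β n : ℂ)) • Polynomial.X ^ (n - 1))
    (u : PowerSeries ℂ)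
    (hu0 : PowerSeries.constantCoeff u = 0) (hu1 : PowerSeries.coeff 1 u = 1) :
    (PowerSeries.mk (fun n => ((betaFact β n : ℂ))⁻¹ • D (P n)) =
      PowerSeries.map (Polynomial.C : ℂ →+* Polynomial ℂ) u *
        PowerSeries.mk (fun n => ((betaFact β n : ℂ))⁻¹ • P n))
    ↔
    (∀ n : ℕ, ((betaFact β n : ℂ))⁻¹ • P n =
      ∑ k ∈ Finset.range (n + 1),
        ((betaFact β k : ℂ))⁻¹ •
          (Polynomial.C (PowerSeries.coeff n (u ^ k)) * Polynomial.X ^ k)) := by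
  have hb0 : (betaFact β 0 : ℂ) = 1 := by simp [betaFact]
  have hRdef : ∀ n, (∑ k ∈ Finset.range (n + 1),
        ((betaFact β k : ℂ))⁻¹ •
          (Polynomial.C (PowerSeries.coeff n (u ^ k)) * Polynomial.X ^ k)) = Rpoly β u n :=
    fun n => rfl
  constructor
  · intro h n
    rw [hRdef n]
    have hn : ∀ m, ((betaFact β m : ℂ))⁻¹ • D (P m) =
        ∑ p ∈ Finset.HasAntidiagonal.antidiagonal m,
          Polynomial.C (PowerSeries.coeff p.1 u) * (((betaFact β p.2 : ℂ))⁻¹ • P p.2) := by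
      intro m
      have hc := congrArg (PowerSeries.coeff m) h
      simpa [PowerSeries.coeff_mk, PowerSeries.coeff_mul, PowerSeries.coeff_map] using hc
    induction n using Nat.strong_induction_on with
    | _ n ih =>
      match n with
      | 0 =>
        have hP0 : P 0 = 1 := ((hmonic 0).natDegree_eq_zero).mp (hdeg 0)
        have hR0 : Rpoly β u 0 = 1 := by
          simp [Rpoly, hb0]
        rw [hR0, hP0, hb0]; simp
      | n+1 =>
        have key : D (((betaFact β (n+1) : ℂ))⁻¹ • P (n+1)) = D (Rpoly β u (n+1)) := by
          rw [map_smul, hn (n+1), D_Rpoly β u hβ0 hβpos D hD hu0]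
          apply Finset.sum_congr rfl
          intro p hp
          have hps := Finset.HasAntidiagonal.mem_antidiagonal.mp hp
          rcases Nat.eq_zero_or_pos p.1 with h1 | h1
          · have hz : PowerSeries.coeff p.1 u = 0 := by
              rw [h1]; simpa [PowerSeries.coeff_zero_eq_constantCoeff] using hu0
            simp [hz]
          · have hlt : p.2 < n + 1 := by omega
            rw [ih p.2 hlt]
        have h0 : (((betaFact β (n+1) : ℂ))⁻¹ • P (n+1)).coeff 0 = (Rpoly β u (n+1)).coeff 0 := by
          rw [Polynomial.coeff_smul, hzero (n+1) (by omega), coeff_Rpoly' β u hu0]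
          simp
        exact D_inj β hβ0 hβpos D hD h0 key
  · intro h
    have hQ : ∀ k, ((betaFact β k : ℂ))⁻¹ • P k = Rpoly β u k :=
      fun k => (h k).trans (hRdef k)
    refine PowerSeries.ext fun m => ?_
    rw [PowerSeries.coeff_mk, PowerSeries.coeff_mul]
    calc ((betaFact β m : ℂ))⁻¹ • D (P m) = D (Rpoly β u m) := by rw [← map_smul, hQ m]
    _ = ∑ p ∈ Finset.HasAntidiagonal.antidiagonal m,
          Polynomial.C (PowerSeries.coeff p.1 u) * Rpoly β u p.2 :=
        D_Rpoly β u hβ0 hβpos D hD hu0 m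
    _ = _ := by
        apply Finset.sum_congr rfl
        intro p _
        rw [PowerSeries.coeff_map, PowerSeries.coeff_mk, hQ p.2]
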